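/- For all integers n ≥ 1 and m ≥ 2, 0 < a(n,m) − ã(n,m) ≤ 2m (log n + 1)^{m−2}, where ã(n,m) := ∑_{1 ≤ i₁ < i₂ < ⋯ < i_m ≤ n} 1/(i₁ i₂ ⋯ i_m) is the analogous sum over strictly increasing m-tuples (so ã(n,m) = 0 when m > n). -/

import Mathlib

open Finset

/-- For `n ≥ 1`, `m ≥ 2`, writing
`a(n,m) = ∑_{k=1}^{n} C(n,k)(−1)^{k+1}/k^m` and
`ã(n,m) = ∑_{1 ≤ i₁ < ⋯ < i_m ≤ n} 1/(i₁⋯i_m)` (the sum over strictly increasing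
`m`-tuples), we have `0 < a(n,m) − ã(n,m) ≤ 2m (log n + 1)^{m−2}`. -/

lemma sum_Icc_one {M : Type} [AddCommMonoid M] (n : ℕ) (f : ℕ → M) :
    ∑ x ∈ Icc 1 n, f x = ∑ i ∈ range n, f (i+1) := by
  have h : Icc 1 n = (range n).map ⟨fun i => i + 1, fun a b hab => by simpa using hab⟩ := by
    ext x
    simp only [mem_Icc, Finset.mem_map, Finset.mem_range, Function.Embedding.coeFn_mk]
    constructor
    · intro ⟨h1, h2⟩; exact ⟨x - 1, by omega, by show x - 1 + 1 = x; omega⟩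
    · rintro ⟨a, h, rfl⟩; show 1 ≤ a + 1 ∧ a + 1 ≤ n; omega
  rw [h, Finset.sum_map]; rfl

lemma sum_inv_Icc_le (n : ℕ) : ∑ x ∈ Icc 1 n, ((x:ℝ))⁻¹ ≤ Real.log n + 1 := by
  have h1 : ∑ x ∈ Icc 1 n, ((x:ℝ))⁻¹ = (harmonic n : ℝ) := by
    rw [harmonic, sum_Icc_one]
    push_cast
    simp [one_div]
  rw [h1]
  have := harmonic_le_one_add_log n
  linarith

lemma sum_inv_sq_le (n : ℕ) : ∑ x ∈ Icc 1 n, ((x:ℝ))⁻¹ * ((x:ℝ))⁻¹ ≤ 2 := by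
  have key : ∀ k : ℕ, 1 ≤ k → ∑ x ∈ Icc 1 k, ((x:ℝ))⁻¹ * ((x:ℝ))⁻¹ ≤ 2 - (k:ℝ)⁻¹ := by
    intro k hk
    induction k with
    | zero => omega
    | succ k ih =>
      rcases Nat.lt_or_ge 1 (k+1) with h | h
      · have hk1 : 1 ≤ k := by omega
        rw [Finset.sum_Icc_succ_top (by omega : 1 ≤ k + 1)]
        have hkpos : (0:ℝ) < k := by exact_mod_cast hk1
        have hk1pos : (0:ℝ) < (k:ℝ) + 1 := by linarith
        have step : ((k+1:ℕ):ℝ)⁻¹ * ((k+1:ℕ):ℝ)⁻¹ ≤ (k:ℝ)⁻¹ - ((k:ℝ)+1)⁻¹ := by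
          push_cast
          rw [inv_sub_inv (ne_of_gt hkpos) (ne_of_gt hk1pos), ← mul_inv,
            inv_le_iff_one_le_mul₀ (by positivity), div_mul_eq_mul_div, le_div_iff₀ (by positivity)]
          ring_nf
          nlinarith [mul_pos hkpos hk1pos]
        have := ih hk1
        push_cast at step ⊢
        linarith
      · have : k + 1 = 1 := by omega
        rw [this]; norm_num
  rcases Nat.eq_zero_or_pos n with h | h
  · simp [h]
  · have h2 := key n h
    have h3 : (0:ℝ) < (n:ℝ)⁻¹ := by positivity
    linarith
noncomputable def A (n m : ℕ) : ℝ :=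
  ∑ k ∈ Icc 1 n, (n.choose k : ℝ) * (-1:ℝ)^(k+1) / (k:ℝ)^m

lemma A_zero (m : ℕ) : A 0 m = 0 := by simp [A]

lemma A_base (n : ℕ) (hn : 1 ≤ n) : A n 0 = 1 := by
  have h0 : ∑ i ∈ range (n+1), (-1:ℝ)^i * (n.choose i : ℝ) = 0 := by
    have := Int.alternating_sum_range_choose (n := n)
    rw [if_neg (by omega)] at this
    exact_mod_cast congrArg (fun z : ℤ => (z : ℝ)) this
  rw [Finset.sum_range_succ'] at h0
  simp only [pow_succ] at h0
  unfold A
  rw [sum_Icc_one]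
  simp only [pow_zero, div_one]
  have : ∀ i ∈ range n, (n.choose (i+1) : ℝ) * (-1:ℝ)^(i+1+1) = (-1:ℝ)^i * (n.choose (i+1):ℝ) := by
    intro i _
    ring_nf
  rw [Finset.sum_congr rfl this]
  simp at h0 ⊢
  linarith [h0]

lemma A_rec (n m : ℕ) : A (n+1) (m+1) = A n (m+1) + A (n+1) m / ((n:ℝ)+1) := by
  unfold A
  rw [sum_Icc_one, sum_Icc_one, sum_Icc_one]
  have split : ∀ j ∈ range (n+1),
      ((n+1).choose (j+1) : ℝ) * (-1:ℝ)^(j+1+1) / ((j+1:ℕ):ℝ)^(m+1)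
      = (n.choose (j+1) : ℝ) * (-1:ℝ)^(j+1+1) / ((j+1:ℕ):ℝ)^(m+1)
        + ((n+1).choose (j+1) : ℝ) * (-1:ℝ)^(j+1+1) / ((j+1:ℕ):ℝ)^m / ((n:ℝ)+1) := by
    intro j _
    have hc : ((n+1).choose (j+1) : ℝ) = (n.choose (j+1) : ℝ) + (n.choose j : ℝ) := by
      rw [Nat.choose_succ_succ']
      push_cast
      ring
    have hkey : ((n:ℝ)+1) * (n.choose j : ℝ) = ((n+1).choose (j+1) : ℝ) * ((j:ℝ)+1) := by
      have := Nat.add_one_mul_choose_eq n j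
      exact_mod_cast congrArg (fun z : ℕ => (z : ℝ)) this
    have hj1 : ((j+1:ℕ):ℝ) ≠ 0 := by positivity
    have hn1 : ((n:ℝ)+1) ≠ 0 := by positivity
    rw [hc, add_mul, add_div]
    congr 1
    push_cast at *
    field_simp
    ring_nf
    rw [show 1+j = j+1 from Nat.add_comm 1 j]
    linear_combination ((j:ℝ)+1)^m * hkey + ((j:ℝ)+1) * ((j:ℝ)+1)^m * hc
  rw [Finset.sum_congr rfl split, Finset.sum_add_distrib]
  congr 1
  · rw [Finset.sum_range_succ, Nat.choose_succ_self]
    simp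
  · rw [← Finset.sum_div]

noncomputable def W (n m : ℕ) : ℝ :=
  ∑ f ∈ (Fintype.piFinset fun _ : Fin m => Icc 1 n).filter (fun f => Monotone f),
    ∏ j : Fin m, ((f j : ℝ))⁻¹

noncomputable def R : ℕ → ℕ → ℝ
  | _, 0 => 1
  | 0, _+1 => 0
  | n+1, m+1 => R n (m+1) + R (n+1) m / ((n:ℝ)+1)

lemma W_base (n : ℕ) : W n 0 = 1 := by
  unfold W
  rw [show (Fintype.piFinset fun _ : Fin 0 => Icc 1 n).filter (fun f => Monotone f)
      = {fun i : Fin 0 => i.elim0} from ?_]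
  · simp
  · ext f
    simp only [Finset.mem_filter, Fintype.mem_piFinset, Finset.mem_singleton]
    constructor
    · intro _; funext i; exact i.elim0
    · rintro rfl
      exact ⟨fun i => i.elim0, fun a b h => by exact a.elim0⟩

lemma W_zero (m : ℕ) : W 0 (m+1) = 0 := by
  unfold W
  rw [Finset.sum_eq_zero_iff_of_nonneg]
  · intro f hf
    simp only [Finset.mem_filter, Fintype.mem_piFinset] at hf
    have := hf.1 0
    simp at this
  · intro f hf
    positivity

lemma W_rec (n m : ℕ) : W (n+1) (m+1) = W n (m+1) + W (n+1) m / ((n:ℝ)+1) := by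
  classical
  set S := (Fintype.piFinset fun _ : Fin (m+1) => Icc 1 (n+1)).filter (fun f => Monotone f) with hS
  have hsplit := Finset.sum_filter_add_sum_filter_not S (fun f => f (Fin.last m) ≤ n)
    (fun f => ∏ j : Fin (m+1), ((f j : ℝ))⁻¹)
  unfold W
  rw [← hsplit]
  congr 1
  · -- part 1 : filter (f last ≤ n) = Wset n (m+1)
    congr 1
    ext f
    simp only [hS, Finset.mem_filter, Fintype.mem_piFinset, Finset.mem_Icc]
    constructor
    · rintro ⟨⟨h1, h2⟩, h3⟩
      exact ⟨fun i => ⟨(h1 i).1, le_trans (h2 (Fin.le_last i)) h3⟩, h2⟩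
    · rintro ⟨h1, h2⟩
      exact ⟨⟨fun i => ⟨(h1 i).1, le_trans (h1 i).2 (by omega)⟩, h2⟩, (h1 (Fin.last m)).2⟩
  · -- part 2 : bijection with Wset (n+1) m via init/snoc
    rw [div_eq_mul_inv, Finset.sum_mul]
    refine Finset.sum_nbij' (fun f => Fin.init f) (fun g => Fin.snoc g (n+1)) ?_ ?_ ?_ ?_ ?_
    · intro f hf
      simp only [hS, Finset.mem_filter, Fintype.mem_piFinset] at hf ⊢
      refine ⟨fun i => hf.1.1 _, ?_⟩
      intro a b hab
      exact hf.1.2 (by simpa using hab)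
    · intro g hg
      simp only [Finset.mem_filter, Fintype.mem_piFinset, Finset.mem_Icc] at hg
      simp only [hS, Finset.mem_filter, Fintype.mem_piFinset, Finset.mem_Icc]
      have hmem : ∀ i : Fin (m+1), 1 ≤ (Fin.snoc g (n+1) : Fin (m+1) → ℕ) i ∧ (Fin.snoc g (n+1) : Fin (m+1) → ℕ) i ≤ n+1 := by
        intro i
        refine Fin.lastCases ?_ ?_ i
        · rw [Fin.snoc_last]; omega
        · intro j; rw [Fin.snoc_castSucc]; exact hg.1 j
      have hmono : Monotone (Fin.snoc g (n+1) : Fin (m+1) → ℕ) := by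
        rw [Fin.monotone_iff_le_succ]
        intro i
        rw [Fin.snoc_castSucc]
        by_cases h : i.succ = Fin.last m
        · rw [h, Fin.snoc_last]
          exact (hg.1 i).2
        · rw [← Fin.castSucc_castPred i.succ h, Fin.snoc_castSucc]
          refine hg.2 ?_
          have : i.castSucc < (i.succ.castPred h).castSucc := by
            rw [Fin.castSucc_castPred]
            exact Fin.castSucc_lt_succ (i := i)
          exact le_of_lt (by exact_mod_cast Fin.castSucc_lt_castSucc_iff.mp this)
        -- condition: ¬ snoc last ≤ n
      refine ⟨⟨hmem, hmono⟩, ?_⟩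
      rw [Fin.snoc_last]; omega
    · intro f hf
      simp only [hS, Finset.mem_filter, Fintype.mem_piFinset, Finset.mem_Icc] at hf
      have hlast : f (Fin.last m) = n + 1 := by
        have := hf.1.1 (Fin.last m)
        have h2 := hf.2
        omega
      conv_rhs => rw [← Fin.snoc_init_self f]
      rw [hlast]
    · intro g hg
      exact Fin.init_snoc _ _
    · intro f hf
      simp only [hS, Finset.mem_filter, Fintype.mem_piFinset, Finset.mem_Icc] at hf
      have hlast : f (Fin.last m) = n + 1 := by
        have := hf.1.1 (Fin.last m)
        have h2 := hf.2
        omega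
      rw [Fin.prod_univ_castSucc, hlast]
      push_cast
      rfl

lemma R_base (n : ℕ) : R n 0 = 1 := by cases n <;> simp [R]

lemma W_R : ∀ m n, W n m = R n m := by
  intro m
  induction m with
  | zero => intro n; rw [W_base, R_base]
  | succ m ihm =>
    intro n
    induction n with
    | zero => rw [W_zero]; simp [R]
    | succ n ihn =>
      rw [W_rec, ihn, ihm]
      simp [R]

lemma A_R : ∀ m n, A (n+1) m = R (n+1) m := by
  intro m
  induction m with
  | zero => intro n; rw [A_base _ (by omega), R_base]
  | succ m ihm =>
    intro n
    induction n with
    | zero =>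
      rw [A_rec, A_zero, ihm 0]
      simp [R]
    | succ n ihn =>
      rw [A_rec, ihn, ihm]
      simp [R]

lemma Ebound (n M : ℕ) (j : Fin (M+1)) :
    ∑ f ∈ (Fintype.piFinset fun _ : Fin (M+2) => Icc 1 n).filter
        (fun f => f j.castSucc = f j.succ), ∏ k : Fin (M+2), ((f k : ℝ))⁻¹
      ≤ 2 * (Real.log n + 1) ^ M := by
  classical
  have hsA : j.succ.succAbove j = j.castSucc :=
    Fin.succAbove_of_castSucc_lt _ _ (Fin.castSucc_lt_succ (i := j))
  have hstep : ∑ f ∈ (Fintype.piFinset fun _ : Fin (M+2) => Icc 1 n).filter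
        (fun f => f j.castSucc = f j.succ), ∏ k : Fin (M+2), ((f k : ℝ))⁻¹
      = ∑ g ∈ (Fintype.piFinset fun _ : Fin (M+1) => Icc 1 n),
          ∏ i : Fin (M+1), (((g i : ℝ))⁻¹ * if i = j then ((g i : ℝ))⁻¹ else 1) := by
    refine Finset.sum_nbij' (fun f => j.succ.removeNth f)
      (fun g => j.succ.insertNth (g j) g) ?_ ?_ ?_ ?_ ?_
    · intro f hf
      simp only [Finset.mem_filter, Fintype.mem_piFinset] at hf ⊢
      exact fun k => hf.1 _
    · intro g hg
      simp only [Fintype.mem_piFinset] at hg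
      simp only [Finset.mem_filter, Fintype.mem_piFinset]
      constructor
      · intro k
        refine Fin.succAboveCases j.succ ?_ ?_ k
        · rw [Fin.insertNth_apply_same]; exact hg j
        · intro i; rw [Fin.insertNth_apply_succAbove]; exact hg i
      · rw [← hsA, Fin.insertNth_apply_succAbove, Fin.insertNth_apply_same]
    · intro f hf
      simp only [Finset.mem_filter, Fintype.mem_piFinset] at hf
      have h1 : (j.succ.removeNth f) j = f j.succ := by
        show f (j.succ.succAbove j) = f j.succ
        rw [hsA, hf.2]
      show j.succ.insertNth ((j.succ.removeNth f) j) (j.succ.removeNth f) = f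
      rw [h1]
      exact Fin.insertNth_self_removeNth _ _
    · intro g hg
      funext k
      exact Fin.insertNth_apply_succAbove _ _ _ _
    · intro f hf
      simp only [Finset.mem_filter, Fintype.mem_piFinset] at hf
      rw [Fin.prod_univ_succAbove (fun k => ((f k : ℝ))⁻¹) j.succ]
      rw [Finset.prod_mul_distrib, Finset.prod_ite_eq' Finset.univ j
        (fun i => ((j.succ.removeNth f i : ℝ))⁻¹), if_pos (Finset.mem_univ j)]
      have h1 : (j.succ.removeNth f) j = f j.succ := by
        show f (j.succ.succAbove j) = f j.succ
        rw [hsA, hf.2]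
      rw [h1, show (∏ x : Fin (M+1), ((j.succ.removeNth f x : ℝ))⁻¹)
        = ∏ x : Fin (M+1), ((f (j.succ.succAbove x) : ℝ))⁻¹ from rfl]
      ring
  rw [hstep]
  have hps := Finset.prod_univ_sum (fun _ : Fin (M+1) => Icc 1 n)
    (fun i x => ((x:ℝ))⁻¹ * if i = j then ((x:ℝ))⁻¹ else 1)
  rw [← hps]
  have hlog : (0:ℝ) ≤ Real.log n := by
    rcases Nat.eq_zero_or_pos n with h | h
    · simp [h]
    · exact Real.log_nonneg (by exact_mod_cast h)
  have hH : ∑ x ∈ Icc 1 n, ((x:ℝ))⁻¹ ≤ Real.log n + 1 := sum_inv_Icc_le n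
  have hHnn : (0:ℝ) ≤ ∑ x ∈ Icc 1 n, ((x:ℝ))⁻¹ := by positivity
  rw [Finset.prod_eq_prod_diff_singleton_mul (Finset.mem_univ j)]
  have hSj : ∑ x ∈ Icc 1 n, (((x:ℝ))⁻¹ * if j = j then ((x:ℝ))⁻¹ else 1) ≤ 2 := by
    simp only [if_pos rfl]
    exact sum_inv_sq_le n
  have hSjnn : (0:ℝ) ≤ ∑ x ∈ Icc 1 n, (((x:ℝ))⁻¹ * if j = j then ((x:ℝ))⁻¹ else 1) := by
    apply Finset.sum_nonneg; intro x _; split <;> positivity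
  have hprod : ∏ i ∈ Finset.univ \ {j}, (∑ x ∈ Icc 1 n, (((x:ℝ))⁻¹ * if i = j then ((x:ℝ))⁻¹ else 1))
      ≤ (Real.log n + 1) ^ M := by
    have hcard : (Finset.univ \ {j} : Finset (Fin (M+1))).card = M := by
      rw [Finset.card_sdiff_of_subset (by simp), Finset.card_univ]
      simp
    calc ∏ i ∈ Finset.univ \ {j}, (∑ x ∈ Icc 1 n, (((x:ℝ))⁻¹ * if i = j then ((x:ℝ))⁻¹ else 1))
        ≤ ∏ i ∈ Finset.univ \ {j}, (Real.log n + 1) := by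
          apply Finset.prod_le_prod
          · intro i _
            apply Finset.sum_nonneg; intro x _; split <;> positivity
          · intro i hi
            have hij : i ≠ j := by simp only [Finset.mem_sdiff, Finset.mem_singleton] at hi; exact hi.2
            simp only [if_neg hij, mul_one]
            exact hH
      _ = (Real.log n + 1) ^ M := by rw [Finset.prod_const, hcard]
  calc (∏ i ∈ Finset.univ \ {j}, (∑ x ∈ Icc 1 n, (((x:ℝ))⁻¹ * if i = j then ((x:ℝ))⁻¹ else 1)))
        * (∑ x ∈ Icc 1 n, (((x:ℝ))⁻¹ * if j = j then ((x:ℝ))⁻¹ else 1))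
      ≤ (Real.log n + 1) ^ M * 2 := by
        apply mul_le_mul hprod hSj hSjnn (by positivity)
    _ = 2 * (Real.log n + 1) ^ M := by ring

theorem alternating_binomial_sum_sub_strict_tuples_bound
    (n m : ℕ) (hn : 1 ≤ n) (hm : 2 ≤ m) :
    0 < (∑ k ∈ Finset.Icc 1 n, (n.choose k : ℝ) * (-1 : ℝ) ^ (k + 1) / (k : ℝ) ^ m)
        - ∑ f ∈ (Fintype.piFinset fun _ : Fin m => Finset.Icc 1 n).filter
            (fun f => StrictMono f), (∏ j : Fin m, (f j : ℝ))⁻¹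
    ∧ (∑ k ∈ Finset.Icc 1 n, (n.choose k : ℝ) * (-1 : ℝ) ^ (k + 1) / (k : ℝ) ^ m)
        - (∑ f ∈ (Fintype.piFinset fun _ : Fin m => Finset.Icc 1 n).filter
            (fun f => StrictMono f), (∏ j : Fin m, (f j : ℝ))⁻¹)
      ≤ 2 * m * (Real.log n + 1) ^ (m - 2) := by
  classical
  obtain ⟨M, rfl⟩ : ∃ M, m = M + 2 := ⟨m - 2, by omega⟩
  obtain ⟨n', rfl⟩ : ∃ n', n = n' + 1 := ⟨n - 1, by omega⟩
  set n := n' + 1 with hn'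
  set P := Fintype.piFinset fun _ : Fin (M+2) => Icc 1 n with hP
  set Sset := P.filter (fun f => StrictMono f) with hSset
  set Wset := P.filter (fun f => Monotone f) with hWset
  -- rewrite the binomial sum as W
  have hA : (∑ k ∈ Finset.Icc 1 n, (n.choose k : ℝ) * (-1 : ℝ) ^ (k + 1) / (k : ℝ) ^ (M+2))
      = ∑ f ∈ Wset, ∏ j : Fin (M+2), ((f j : ℝ))⁻¹ := by
    have h1 : A n (M+2) = W n (M+2) := by rw [A_R, W_R]
    exact h1
  -- rewrite strict sum with distributed inverse
  have hT : (∑ f ∈ Sset, (∏ j : Fin (M+2), (f j : ℝ))⁻¹)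
      = ∑ f ∈ Sset, ∏ j : Fin (M+2), ((f j : ℝ))⁻¹ := by
    refine Finset.sum_congr rfl fun f _ => ?_
    rw [← Finset.prod_inv_distrib]
  have hsub : Sset ⊆ Wset := by
    intro f hf
    simp only [hSset, hWset, Finset.mem_filter] at hf ⊢
    exact ⟨hf.1, hf.2.monotone⟩
  have hdiff : (∑ f ∈ Wset, ∏ j : Fin (M+2), ((f j : ℝ))⁻¹)
      - (∑ f ∈ Sset, ∏ j : Fin (M+2), ((f j : ℝ))⁻¹)
      = ∑ f ∈ Wset \ Sset, ∏ j : Fin (M+2), ((f j : ℝ))⁻¹ :=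
    (Finset.sum_sdiff_eq_sub hsub).symm
  have hposmem : ∀ f ∈ Wset \ Sset, (0:ℝ) < ∏ j : Fin (M+2), ((f j : ℝ))⁻¹ := by
    intro f hf
    apply Finset.prod_pos
    intro j _
    have : f j ∈ Icc 1 n := by
      have := (Finset.mem_sdiff.mp hf).1
      simp only [hWset, hP, Finset.mem_filter, Fintype.mem_piFinset] at this
      exact this.1 j
    simp only [Finset.mem_Icc] at this
    have : (0:ℕ) < f j := by omega
    positivity
  have hne : (Wset \ Sset).Nonempty := by
    refine ⟨fun _ => 1, ?_⟩
    rw [Finset.mem_sdiff]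
    constructor
    · simp only [hWset, hP, Finset.mem_filter, Fintype.mem_piFinset]
      exact ⟨fun i => by simp [Finset.mem_Icc]; omega, monotone_const⟩
    · simp only [hSset, Finset.mem_filter]
      rintro ⟨-, hsm⟩
      have h01 : (0 : Fin (M+2)) < 1 := by
        rw [Fin.lt_def]
        simp
      exact absurd (hsm h01) (by simp)
  constructor
  · rw [hA, hT, hdiff]
    exact Finset.sum_pos hposmem hne
  · rw [hA, hT, hdiff]
    have key : ∑ f ∈ Wset \ Sset, ∏ j : Fin (M+2), ((f j : ℝ))⁻¹
        ≤ ∑ j : Fin (M+1), ∑ f ∈ P.filter (fun f => f j.castSucc = f j.succ),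
            ∏ k : Fin (M+2), ((f k : ℝ))⁻¹ := by
      have step1 : ∀ f ∈ Wset \ Sset, (∏ k : Fin (M+2), ((f k : ℝ))⁻¹)
          ≤ ∑ j : Fin (M+1), if f j.castSucc = f j.succ
              then ∏ k : Fin (M+2), ((f k : ℝ))⁻¹ else 0 := by
        intro f hf
        rw [Finset.mem_sdiff] at hf
        obtain ⟨hfW, hfS⟩ := hf
        simp only [hWset, hP, Finset.mem_filter, Fintype.mem_piFinset] at hfW
        simp only [hSset, hP, Finset.mem_filter, Fintype.mem_piFinset] at hfS
        have hns : ¬ StrictMono f := fun h => hfS ⟨hfW.1, h⟩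
        rw [Fin.strictMono_iff_lt_succ] at hns
        push_neg at hns
        obtain ⟨j₀, hj₀⟩ := hns
        have heq : f j₀.castSucc = f j₀.succ :=
          le_antisymm (hfW.2 (le_of_lt (Fin.castSucc_lt_succ (i := j₀)))) (by omega)
        have hnn : ∀ j ∈ (Finset.univ : Finset (Fin (M+1))),
            (0:ℝ) ≤ if f j.castSucc = f j.succ then ∏ k : Fin (M+2), ((f k : ℝ))⁻¹ else 0 := by
          intro j _
          split
          · positivity
          · exact le_rfl
        have := Finset.single_le_sum (f := fun j : Fin (M+1) =>
            if f j.castSucc = f j.succ then ∏ k : Fin (M+2), ((f k : ℝ))⁻¹ else 0)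
          hnn (Finset.mem_univ j₀)
        rw [if_pos heq] at this
        exact this
      calc ∑ f ∈ Wset \ Sset, ∏ j : Fin (M+2), ((f j : ℝ))⁻¹
          ≤ ∑ f ∈ Wset \ Sset, ∑ j : Fin (M+1), (if f j.castSucc = f j.succ
              then ∏ k : Fin (M+2), ((f k : ℝ))⁻¹ else 0) :=
            Finset.sum_le_sum step1
        _ = ∑ j : Fin (M+1), ∑ f ∈ Wset \ Sset, (if f j.castSucc = f j.succ
              then ∏ k : Fin (M+2), ((f k : ℝ))⁻¹ else 0) := Finset.sum_comm
        _ ≤ ∑ j : Fin (M+1), ∑ f ∈ P.filter (fun f => f j.castSucc = f j.succ),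
              ∏ k : Fin (M+2), ((f k : ℝ))⁻¹ := by
            refine Finset.sum_le_sum fun j _ => ?_
            rw [← Finset.sum_filter]
            refine Finset.sum_le_sum_of_subset_of_nonneg ?_ ?_
            · intro f hf
              simp only [Finset.mem_filter] at hf ⊢
              refine ⟨?_, hf.2⟩
              have := (Finset.mem_sdiff.mp hf.1).1
              simp only [hWset, Finset.mem_filter] at this
              exact this.1
            · intro f hf _
              have : f ∈ P := (Finset.mem_filter.mp hf).1
              simp only [hP, Fintype.mem_piFinset, Finset.mem_Icc] at this
              apply Finset.prod_nonneg
              intro k _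
              positivity
    refine le_trans key ?_
    have hEach : ∀ j : Fin (M+1), ∑ f ∈ P.filter (fun f => f j.castSucc = f j.succ),
        ∏ k : Fin (M+2), ((f k : ℝ))⁻¹ ≤ 2 * (Real.log n + 1) ^ M := fun j => Ebound n M j
    calc ∑ j : Fin (M+1), ∑ f ∈ P.filter (fun f => f j.castSucc = f j.succ),
          ∏ k : Fin (M+2), ((f k : ℝ))⁻¹
        ≤ ∑ _j : Fin (M+1), 2 * (Real.log n + 1) ^ M := Finset.sum_le_sum fun j _ => hEach j
      _ = ((M:ℝ)+1) * (2 * (Real.log n + 1) ^ M) := by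
          rw [Finset.sum_const, Finset.card_univ, Fintype.card_fin, nsmul_eq_mul]
          push_cast
          ring
      _ ≤ 2 * ((M:ℝ)+2) * (Real.log n + 1) ^ M := by
          have hbase : (0:ℝ) ≤ (Real.log n + 1) ^ M := by
            have : (0:ℝ) ≤ Real.log n := Real.log_nonneg (by exact_mod_cast hn)
            positivity
          nlinarith [hbase]
      _ = 2 * ((M+2 : ℕ):ℝ) * (Real.log n + 1) ^ ((M+2) - 2) := by
          push_cast
          norm_num
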